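/- Let ℱ ⊆ 𝒮 be a set cover of U, i.e., every element of U belongs to some member of ℱ. Then the graph obtained from the set-cover gadget graph G(U,𝒮) by contracting all edges g s_j with S_j ∈ ℱ — that is, the graph whose vertex set is obtained from V(G(U,𝒮)) by replacing the set {g} ∪ {s_j : S_j ∈ ℱ} with a single new vertex g*, where g* is adjacent to exactly those remaining vertices that are adjacent in G(U,𝒮) to some vertex of {g} ∪ {s_j : S_j ∈ ℱ}, and all other adjacencies are unchanged — is a chordal graph. -/

import Mathlib

/-- Vertices of the set-cover gadget graph: a vertex `s j` for every set `S_j`,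
vertices `a i`, `b i`, `c i` for every universe element `u_i`, and a special vertex `g`. -/
inductive SCVert (n m : ℕ) where
  | s : Fin m → SCVert n m
  | a : Fin n → SCVert n m
  | b : Fin n → SCVert n m
  | c : Fin n → SCVert n m
  | g : SCVert n m
deriving DecidableEq

/-- The base relation for the edges of the set-cover gadget graph for the family
`S : Fin m → Set (Fin n)`. -/
def scRel (n m : ℕ) (S : Fin m → Set (Fin n)) : SCVert n m → SCVert n m → Prop
  | .s _, .s _ => True
  | .g, .s _ => True
  | .g, .a _ => True
  | .g, .b _ => True
  | .a i, .c i' => i = i'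
  | .b i, .c i' => i = i'
  | .c i, .s j => i ∈ S j
  | _, _ => False

/-- The set-cover gadget graph `G(U, 𝒮)`. -/
def scGadget (n m : ℕ) (S : Fin m → Set (Fin n)) : SimpleGraph (SCVert n m) :=
  SimpleGraph.fromRel (scRel n m S)

/-- The graph obtained from the set-cover gadget graph by contracting all edges
`g s_j` with `j ∈ F`: the vertices `{g} ∪ {s_j : j ∈ F}` are replaced by the single
vertex `g` (playing the role of `g*`), which is adjacent to exactly those remaining
vertices adjacent in the gadget graph to some vertex of `{g} ∪ {s_j : j ∈ F}`;
all other adjacencies are unchanged. -/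
def scContracted (n m : ℕ) (S : Fin m → Set (Fin n)) (F : Set (Fin m)) :
    SimpleGraph {v : SCVert n m // ∀ j ∈ F, v ≠ SCVert.s j} :=
  SimpleGraph.fromRel (fun x y =>
    if x.val = SCVert.g then
      (scGadget n m S).Adj SCVert.g y.val ∨
        ∃ j ∈ F, (scGadget n m S).Adj (SCVert.s j) y.val
    else (scGadget n m S).Adj x.val y.val)

/-- `C` is (the vertex set of) an induced cycle on `ℓ` vertices of `G`. -/
def IsInducedCycle {α : Type*} (G : SimpleGraph α) (ℓ : ℕ) (C : Set α) : Prop :=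
  C.ncard = ℓ ∧ Nonempty (G.induce C ≃g SimpleGraph.cycleGraph ℓ)


open SimpleGraph
open scoped Fin.NatCast Fin.CommRing


lemma fin_cast_ne_zero {k d : ℕ} (h1 : 0 < d) (h2 : d < k+4) :
    ((d : ℕ) : Fin (k+4)) ≠ 0 := by
  intro h
  have := congrArg Fin.val h
  rw [Fin.val_natCast, Fin.val_zero, Nat.mod_eq_of_lt h2] at this
  omega

lemma fin_add_two_ne {k : ℕ} (v : Fin (k+4)) : v + 2 ≠ v := by
  intro h
  have h2 : (2 : Fin (k+4)) = 0 := by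
    have := congrArg (· - v) h
    simpa using this
  have h3 : (2 : Fin (k+4)) = ((2 : ℕ) : Fin (k+4)) := by norm_num
  exact fin_cast_ne_zero (by norm_num) (by omega) (h3 ▸ h2)

lemma cyc_not_adj_two {k : ℕ} (v : Fin (k+4)) :
    ¬ (cycleGraph (k+4)).Adj v (v+2) := by
  rw [cycleGraph_adj']
  rintro (h | h)
  · rw [show v - (v+2) = -2 by ring] at h
    have h4 : (-2 : Fin (k+4)) = 1 := Fin.ext (h.trans rfl)
    have h5 : (0 : Fin (k+4)) = 3 := by
      calc (0 : Fin (k+4)) = -2 + 2 := by ring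
        _ = 1 + 2 := by rw [h4]
        _ = 3 := by norm_num
    have h3 : (3 : Fin (k+4)) = ((3 : ℕ) : Fin (k+4)) := by norm_num
    exact fin_cast_ne_zero (by norm_num) (by omega) (h3 ▸ h5.symm)
  · rw [show v + 2 - v = 2 by ring] at h
    have h' : (2 : ℕ) = 1 := (show (2 : Fin (k+4)).val = 2 from rfl) ▸ h
    omega

lemma cyc_adj_succ {k : ℕ} (v : Fin (k+4)) :
    (cycleGraph (k+4)).Adj v (v+1) := by
  rw [cycleGraph_adj']
  right
  rw [show v + 1 - v = 1 by ring]
  rfl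

lemma cyc_adj_pred {k : ℕ} (v : Fin (k+4)) :
    (cycleGraph (k+4)).Adj v (v-1) := by
  rw [cycleGraph_adj']
  left
  rw [show v - (v-1) = 1 by ring]
  rfl

lemma fin_sub_add_two {k : ℕ} (v : Fin (k+4)) : v - 1 + 2 = v + 1 := by ring

lemma fin_pred_ne_succ {k : ℕ} (v : Fin (k+4)) : v - 1 ≠ v + 1 := by
  rw [← fin_sub_add_two v]
  exact (fin_add_two_ne (v-1)).symm

lemma cyc_not_adj_pred_succ {k : ℕ} (v : Fin (k+4)) :
    ¬ (cycleGraph (k+4)).Adj (v-1) (v+1) := by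
  rw [← fin_sub_add_two v]
  exact cyc_not_adj_two (v-1)

section
variable {n m : ℕ} {S : Fin m → Set (Fin n)} {F : Set (Fin m)}

lemma sc_adj_gstar (hcover : ∀ i : Fin n, ∃ j ∈ F, i ∈ S j)
    (hg : ∀ j ∈ F, SCVert.g ≠ SCVert.s j)
    (x : {v : SCVert n m // ∀ j ∈ F, v ≠ SCVert.s j}) (hx : x.val ≠ SCVert.g) :
    (scContracted n m S F).Adj ⟨SCVert.g, hg⟩ x := by
  rw [scContracted, SimpleGraph.fromRel_adj]
  refine ⟨fun h => hx (congrArg Subtype.val h).symm, Or.inl ?_⟩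
  simp only [if_pos rfl]
  obtain ⟨xv, hxp⟩ := x
  cases xv with
  | s j => exact Or.inl (by simp [scGadget, SimpleGraph.fromRel_adj, scRel])
  | a i => exact Or.inl (by simp [scGadget, SimpleGraph.fromRel_adj, scRel])
  | b i => exact Or.inl (by simp [scGadget, SimpleGraph.fromRel_adj, scRel])
  | c i =>
      obtain ⟨j, hjF, hij⟩ := hcover i
      exact Or.inr ⟨j, hjF, by simp [scGadget, SimpleGraph.fromRel_adj, scRel, hij]⟩
  | g => simp at hx

lemma sc_adj_a {i : Fin n} {x y : {v : SCVert n m // ∀ j ∈ F, v ≠ SCVert.s j}}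
    (hx : x.val = SCVert.a i) (h : (scContracted n m S F).Adj x y) :
    y.val = SCVert.g ∨ y.val = SCVert.c i := by
  rw [scContracted, SimpleGraph.fromRel_adj] at h
  obtain ⟨-, h | h⟩ := h
  · rw [hx] at h
    simp only [reduceCtorEq, if_false] at h
    obtain ⟨yv, hyp⟩ := y
    cases yv <;> simp_all [scGadget, SimpleGraph.fromRel_adj, scRel]
  · obtain ⟨yv, hyp⟩ := y
    cases yv <;> simp_all [scGadget, SimpleGraph.fromRel_adj, scRel]

lemma sc_adj_b {i : Fin n} {x y : {v : SCVert n m // ∀ j ∈ F, v ≠ SCVert.s j}}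
    (hx : x.val = SCVert.b i) (h : (scContracted n m S F).Adj x y) :
    y.val = SCVert.g ∨ y.val = SCVert.c i := by
  rw [scContracted, SimpleGraph.fromRel_adj] at h
  obtain ⟨-, h | h⟩ := h
  · rw [hx] at h
    simp only [reduceCtorEq, if_false] at h
    obtain ⟨yv, hyp⟩ := y
    cases yv <;> simp_all [scGadget, SimpleGraph.fromRel_adj, scRel]
  · obtain ⟨yv, hyp⟩ := y
    cases yv <;> simp_all [scGadget, SimpleGraph.fromRel_adj, scRel]

lemma sc_not_adj_cc {i i' : Fin n} {x y : {v : SCVert n m // ∀ j ∈ F, v ≠ SCVert.s j}}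
    (hx : x.val = SCVert.c i) (hy : y.val = SCVert.c i') :
    ¬ (scContracted n m S F).Adj x y := by
  intro h
  rw [scContracted, SimpleGraph.fromRel_adj] at h
  obtain ⟨-, h | h⟩ := h <;>
    simp_all [scGadget, SimpleGraph.fromRel_adj, scRel]

lemma sc_adj_ss {j j' : Fin m} {x y : {v : SCVert n m // ∀ jj ∈ F, v ≠ SCVert.s jj}}
    (hx : x.val = SCVert.s j) (hy : y.val = SCVert.s j') (hxy : x ≠ y) :
    (scContracted n m S F).Adj x y := by
  rw [scContracted, SimpleGraph.fromRel_adj]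
  refine ⟨hxy, Or.inl ?_⟩
  rw [hx, hy]
  simp only [reduceCtorEq, if_false]
  have : SCVert.s j ≠ (SCVert.s j' : SCVert n m) := by
    intro h; exact hxy (Subtype.ext (hx.trans (h.trans hy.symm)))
  simp [scGadget, SimpleGraph.fromRel_adj, scRel, this]

end


/-- If `F` indexes a set cover, then contracting the edges `g s_j`, `j ∈ F`, of the
set-cover gadget graph yields a chordal graph (no induced cycle on ≥ 4 vertices). -/
theorem stmt_13 (n m : ℕ) (S : Fin m → Set (Fin n)) (F : Set (Fin m))
    (hcover : ∀ i : Fin n, ∃ j ∈ F, i ∈ S j) :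
    ∀ ℓ : ℕ, 4 ≤ ℓ →
      ∀ C : Set {v : SCVert n m // ∀ j ∈ F, v ≠ SCVert.s j},
        ¬ IsInducedCycle (scContracted n m S F) ℓ C := by
  intro ℓ hℓ C hC
  obtain ⟨-, ⟨e⟩⟩ := hC
  obtain ⟨k, rfl⟩ : ∃ k, ℓ = k + 4 := ⟨ℓ - 4, by omega⟩
  clear hℓ
  set G := scContracted n m S F with hGdef
  have hgp : ∀ j ∈ F, (SCVert.g : SCVert n m) ≠ SCVert.s j := fun _ _ h => by cases h
  set gv : {v : SCVert n m // ∀ j ∈ F, v ≠ SCVert.s j} := ⟨SCVert.g, hgp⟩ with hgv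
  have adj_iff : ∀ x y : ↥C, G.Adj x.1 y.1 ↔ (SimpleGraph.cycleGraph (k+4)).Adj (e x) (e y) := by
    intro x y
    exact (e.map_adj_iff).symm
  -- step 1: g ∉ C
  have hgnot : gv ∉ C := by
    intro hgC
    set v := e ⟨gv, hgC⟩ with hv
    set x := e.symm (v + 2) with hxdef
    have hex : e x = v + 2 := e.apply_symm_apply _
    have hx_ne : x.1.val ≠ SCVert.g := by
      intro h
      have hx1 : x = ⟨gv, hgC⟩ := Subtype.ext (Subtype.ext h)
      exact fin_add_two_ne v (by rw [← hex, hx1, ← hv])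
    have hadj : G.Adj gv x.1 := sc_adj_gstar hcover hgp x.1 hx_ne
    have : (SimpleGraph.cycleGraph (k+4)).Adj v (v + 2) := by
      rw [← hex]
      exact (adj_iff ⟨gv, hgC⟩ x).mp hadj
    exact cyc_not_adj_two v this
  have hval_g : ∀ x : ↥C, x.1.val ≠ SCVert.g := by
    intro x h
    exact hgnot (by rw [show gv = x.1 from Subtype.ext h.symm]; exact x.2)
  -- step 2: no a i, no b i in C
  have hnota : ∀ (x : ↥C) (i : Fin n), x.1.val ≠ SCVert.a i := by
    intro x i hx
    set v := e x with hv
    set p := e.symm (v - 1) with hp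
    set q := e.symm (v + 1) with hq
    have hep : e p = v - 1 := e.apply_symm_apply _
    have heq : e q = v + 1 := e.apply_symm_apply _
    have hpq : p ≠ q := by
      intro h
      exact fin_pred_ne_succ v (by rw [← hep, ← heq, h])
    have hadjp : G.Adj x.1 p.1 := (adj_iff x p).mpr (by rw [hep]; exact cyc_adj_pred v)
    have hadjq : G.Adj x.1 q.1 := (adj_iff x q).mpr (by rw [heq]; exact cyc_adj_succ v)
    have h1 := (sc_adj_a hx hadjp).resolve_left (hval_g p)
    have h2 := (sc_adj_a hx hadjq).resolve_left (hval_g q)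
    exact hpq (Subtype.ext (Subtype.ext (h1.trans h2.symm)))
  have hnotb : ∀ (x : ↥C) (i : Fin n), x.1.val ≠ SCVert.b i := by
    intro x i hx
    set v := e x with hv
    set p := e.symm (v - 1) with hp
    set q := e.symm (v + 1) with hq
    have hep : e p = v - 1 := e.apply_symm_apply _
    have heq : e q = v + 1 := e.apply_symm_apply _
    have hpq : p ≠ q := by
      intro h
      exact fin_pred_ne_succ v (by rw [← hep, ← heq, h])
    have hadjp : G.Adj x.1 p.1 := (adj_iff x p).mpr (by rw [hep]; exact cyc_adj_pred v)
    have hadjq : G.Adj x.1 q.1 := (adj_iff x q).mpr (by rw [heq]; exact cyc_adj_succ v)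
    have h1 := (sc_adj_b hx hadjp).resolve_left (hval_g p)
    have h2 := (sc_adj_b hx hadjq).resolve_left (hval_g q)
    exact hpq (Subtype.ext (Subtype.ext (h1.trans h2.symm)))
  -- step 3: no c i in C
  have hnotc : ∀ (x : ↥C) (i : Fin n), x.1.val ≠ SCVert.c i := by
    intro x i hx
    set v := e x with hv
    set p := e.symm (v - 1) with hp
    set q := e.symm (v + 1) with hq
    have hep : e p = v - 1 := e.apply_symm_apply _
    have heq : e q = v + 1 := e.apply_symm_apply _
    have hpq : p ≠ q := by
      intro h
      exact fin_pred_ne_succ v (by rw [← hep, ← heq, h])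
    have hadjp : G.Adj x.1 p.1 := (adj_iff x p).mpr (by rw [hep]; exact cyc_adj_pred v)
    have hadjq : G.Adj x.1 q.1 := (adj_iff x q).mpr (by rw [heq]; exact cyc_adj_succ v)
    have hsp : ∃ j, p.1.val = SCVert.s j := by
      cases hpv : p.1.val with
      | s j => exact ⟨j, rfl⟩
      | a i' => exact absurd hpv (hnota p i')
      | b i' => exact absurd hpv (hnotb p i')
      | c i' => exact absurd hadjp (sc_not_adj_cc hx hpv)
      | g => exact absurd hpv (hval_g p)
    have hsq : ∃ j, q.1.val = SCVert.s j := by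
      cases hqv : q.1.val with
      | s j => exact ⟨j, rfl⟩
      | a i' => exact absurd hqv (hnota q i')
      | b i' => exact absurd hqv (hnotb q i')
      | c i' => exact absurd hadjq (sc_not_adj_cc hx hqv)
      | g => exact absurd hqv (hval_g q)
    obtain ⟨j, hj⟩ := hsp
    obtain ⟨j', hj'⟩ := hsq
    have hadjpq : G.Adj p.1 q.1 :=
      sc_adj_ss hj hj' (fun h => hpq (Subtype.ext h))
    have : (SimpleGraph.cycleGraph (k+4)).Adj (v - 1) (v + 1) := by
      rw [← hep, ← heq]
      exact (adj_iff p q).mp hadjpq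
    exact cyc_not_adj_pred_succ v this
  -- step 4: C consists only of s-vertices, contradiction
  set x := e.symm 0 with hx
  set z := e.symm (0 + 2) with hz
  have hex : e x = 0 := e.apply_symm_apply _
  have hez : e z = 0 + 2 := e.apply_symm_apply _
  have hxz : x ≠ z := by
    intro h
    exact fin_add_two_ne (0 : Fin (k+4)) (by rw [← hez, ← h, hex])
  have hs : ∀ y : ↥C, ∃ j, y.1.val = SCVert.s j := by
    intro y
    cases hyv : y.1.val with
    | s j => exact ⟨j, rfl⟩
    | a i' => exact absurd hyv (hnota y i')
    | b i' => exact absurd hyv (hnotb y i')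
    | c i' => exact absurd hyv (hnotc y i')
    | g => exact absurd hyv (hval_g y)
  obtain ⟨j, hj⟩ := hs x
  obtain ⟨j', hj'⟩ := hs z
  have hadjxz : G.Adj x.1 z.1 := sc_adj_ss hj hj' (fun h => hxz (Subtype.ext h))
  have : (SimpleGraph.cycleGraph (k+4)).Adj 0 (0 + 2) := by
    rw [← hez, ← hex]
    exact (adj_iff x z).mp hadjxz
  exact cyc_not_adj_two 0 this
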